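/- arXiv:math/0109020 — 4 statements merged into one kernel-verified Lean document; each statement's English description precedes it below -/
import Mathlib

section
/- Let Λ : P(V) → ℕ be a hypergraph on a finite vertex set V. If v₁, v₂, … and v₁′, v₂′, … are two maximal sequences of permitted collapses (each step removes a vertex carrying at least one patch, where removing v replaces Λ by Λ′ with Λ′(A) = Λ(A) + Λ(A ∪ {v}) for v ∉ A and Λ′(A) = 0 for v ∈ A, and a sequence is maximal when the resulting hypergraph has no patches), then the two sequences remove exactly the same set of vertices. In particular, the set V* of identifiable vertices does not depend on the order of collapse. -/
/-- Removing vertex `v` from the hypergraph `Λ`. -/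
def collapseAt {V : Type*} [DecidableEq V] (Λ : Finset V → ℕ) (v : V) :
    Finset V → ℕ :=
  fun A => if v ∈ A then 0 else Λ A + Λ (insert v A)

/-- The hypergraph obtained after the sequence of vertex removals `l`. -/
def collapseList {V : Type*} [DecidableEq V] (Λ : Finset V → ℕ) :
    List V → (Finset V → ℕ)
  | [] => Λ
  | v :: l => collapseList (collapseAt Λ v) l

/-- `l` is a sequence of permitted collapses: each selected vertex carries a patch
at the time of its removal. -/
def IsPermittedSeq {V : Type*} [DecidableEq V] (Λ : Finset V → ℕ) :
    List V → Prop
  | [] => True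
  | v :: l => 1 ≤ Λ {v} ∧ IsPermittedSeq (collapseAt Λ v) l

/-- A hypergraph is stable when it carries no patches. -/
def IsStable {V : Type*} (Λ : Finset V → ℕ) : Prop := ∀ v : V, Λ {v} = 0

/-- A maximal sequence of permitted collapses: permitted at every step, and the
resulting hypergraph has no patches. -/
def IsMaximalSeq {V : Type*} [DecidableEq V] (Λ : Finset V → ℕ) (l : List V) : Prop :=
  IsPermittedSeq Λ l ∧ IsStable (collapseList Λ l)

lemma collapseList_append {V : Type*} [DecidableEq V] (Λ : Finset V → ℕ) (p q : List V) :
    collapseList Λ (p ++ q) = collapseList (collapseList Λ p) q := by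
  induction p generalizing Λ with
  | nil => rfl
  | cons v p ih => simp [collapseList, ih]

lemma not_mem_of_vanish {V : Type*} [DecidableEq V] :
    ∀ (l : List V) (Λ : Finset V → ℕ) (v : V),
      IsPermittedSeq Λ l → (∀ A, v ∈ A → Λ A = 0) → v ∉ l := by
  intro l
  induction l with
  | nil => simp
  | cons a l ih =>
    intro Λ v h hv
    obtain ⟨h1, h2⟩ := h
    simp only [List.mem_cons, not_or]
    refine ⟨?_, ih _ v h2 ?_⟩
    · rintro rfl
      rw [hv {v} (Finset.mem_singleton_self v)] at h1; omega
    · intro A hA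
      simp only [collapseAt]
      split
      · rfl
      · rw [hv A hA, hv (insert a A) (Finset.mem_insert_of_mem hA)]

lemma isPermittedSeq_nodup {V : Type*} [DecidableEq V] :
    ∀ (l : List V) (Λ : Finset V → ℕ), IsPermittedSeq Λ l → l.Nodup := by
  intro l
  induction l with
  | nil => intro _ _; simp
  | cons a l ih =>
    intro Λ h
    obtain ⟨h1, h2⟩ := h
    exact List.nodup_cons.mpr
      ⟨not_mem_of_vanish l _ a h2 (fun A hA => by simp [collapseAt, hA]), ih _ h2⟩

lemma collapseList_apply {V : Type*} [DecidableEq V] (Λ : Finset V → ℕ) :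
    ∀ l : List V, l.Nodup → ∀ A : Finset V,
    collapseList Λ l A =
      if ∃ v ∈ l, v ∈ A then 0 else ∑ S ∈ l.toFinset.powerset, Λ (A ∪ S) := by
  intro l
  induction l generalizing Λ with
  | nil => intro _ A; simp [collapseList]
  | cons v l ih =>
    intro hnd A
    have hv : v ∉ l := (List.nodup_cons.mp hnd).1
    have hl : l.Nodup := (List.nodup_cons.mp hnd).2
    rw [show collapseList Λ (v :: l) A = collapseList (collapseAt Λ v) l A from rfl,
      ih _ hl]
    by_cases hA : ∃ w ∈ l, w ∈ A
    · rw [if_pos hA, if_pos]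
      obtain ⟨w, hw, hwA⟩ := hA
      exact ⟨w, List.mem_cons_of_mem _ hw, hwA⟩
    · rw [if_neg hA]
      by_cases hvA : v ∈ A
      · rw [if_pos ⟨v, List.mem_cons_self, hvA⟩]
        apply Finset.sum_eq_zero
        intro S hS
        simp [collapseAt, Finset.mem_union, hvA]
      · rw [if_neg (by
          push_neg at hA ⊢
          intro w hw
          rcases List.mem_cons.mp hw with rfl | h
          exacts [hvA, hA w h])]
        have hvT : v ∉ l.toFinset := by simpa using hv
        rw [List.toFinset_cons, Finset.sum_powerset_insert hvT]
        have hterm : ∀ S ∈ l.toFinset.powerset,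
            collapseAt Λ v (A ∪ S) = Λ (A ∪ S) + Λ (A ∪ insert v S) := by
          intro S hS
          have hvS : v ∉ S := fun h => hvT (Finset.mem_powerset.mp hS h)
          have : v ∉ A ∪ S := by simp [hvA, hvS]
          simp [collapseAt, this, Finset.union_insert]
        rw [Finset.sum_congr rfl hterm, Finset.sum_add_distrib]

lemma aux_subset {V : Type*} [DecidableEq V] (Λ : Finset V → ℕ) (l₂ : List V)
    (h₂s : IsStable (collapseList Λ l₂)) (h₂n : l₂.Nodup) :
    ∀ (l₁ p : List V), p.Nodup → p.toFinset ⊆ l₂.toFinset →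
      IsPermittedSeq (collapseList Λ p) l₁ → l₁.toFinset ⊆ l₂.toFinset := by
  intro l₁
  induction l₁ with
  | nil => intro p _ _ _; simp
  | cons v l₁ ih =>
    intro p hpn hps h
    obtain ⟨h1, h2⟩ := h
    rw [collapseList_apply Λ p hpn] at h1
    have hvp : ¬ ∃ w ∈ p, w ∈ ({v} : Finset V) := by
      intro h; rw [if_pos h] at h1; omega
    rw [if_neg hvp] at h1
    obtain ⟨S, hS, hSv⟩ : ∃ S ∈ p.toFinset.powerset, 1 ≤ Λ ({v} ∪ S) := by
      by_contra h
      push_neg at h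
      have : ∑ S ∈ p.toFinset.powerset, Λ ({v} ∪ S) = 0 :=
        Finset.sum_eq_zero (fun S hS => by have := h S hS; omega)
      omega
    have hv2 : v ∈ l₂.toFinset := by
      by_contra hv2
      have hst := h₂s v
      rw [collapseList_apply Λ l₂ h₂n, if_neg] at hst
      · have := (Finset.sum_eq_zero_iff.mp hst) S
          (Finset.mem_powerset.mpr ((Finset.mem_powerset.mp hS).trans hps))
        omega
      · rintro ⟨w, hw, hws⟩
        rw [Finset.mem_singleton] at hws
        subst hws
        exact hv2 (List.mem_toFinset.mpr hw)
    have hvnp : v ∉ p := fun h => hvp ⟨v, h, Finset.mem_singleton_self v⟩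
    have key : IsPermittedSeq (collapseList Λ (p ++ [v])) l₁ := by
      rw [collapseList_append]
      exact h2
    intro x hx
    rw [List.mem_toFinset] at hx
    rcases List.mem_cons.mp hx with rfl | hx
    · exact hv2
    · refine ih (p ++ [v]) ?_ ?_ key (List.mem_toFinset.mpr hx)
      · simp [List.nodup_append, hpn, hvnp]
        intro a ha h; subst h; exact hvnp ha
      · intro y hy
        rw [List.toFinset_append] at hy
        rcases Finset.mem_union.mp hy with hy | hy
        · exact hps hy
        · simp only [List.toFinset_cons, List.toFinset_nil, LawfulSingleton.insert_empty_eq,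
            Finset.mem_singleton] at hy
          subst hy; exact hv2

/-- Any two maximal sequences of permitted collapses remove exactly the same set of
vertices: the set `V*` of identifiable vertices does not depend on the order of collapse. -/
theorem maximalSeq_toFinset_eq {V : Type*} [Fintype V] [DecidableEq V]
    (Λ : Finset V → ℕ) (l₁ l₂ : List V)
    (h₁ : IsMaximalSeq Λ l₁) (h₂ : IsMaximalSeq Λ l₂) :
    l₁.toFinset = l₂.toFinset := by
  obtain ⟨h₁p, h₁s⟩ := h₁
  obtain ⟨h₂p, h₂s⟩ := h₂
  have n₁ := isPermittedSeq_nodup l₁ Λ h₁p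
  have n₂ := isPermittedSeq_nodup l₂ Λ h₂p
  apply Finset.Subset.antisymm
  · exact aux_subset Λ l₂ h₂s n₂ l₁ [] (by simp) (by simp) h₁p
  · exact aux_subset Λ l₁ h₁s n₁ l₂ [] (by simp) (by simp) h₂p
end

section
/- Let z*(p,α) ∈ [0,1) be the unique root of α·t + log(1−t) = log(1−p) for p ∈ (0,1), α > 0. Then for fixed 0 < α < 1, z*(p,α)/p → 1/(1−α) as p → 0⁺. -/
open Real Filter

/-- Subcritical asymptotics: if `z p ∈ [0,1)` solves `α z + log(1−z) = log(1−p)` for each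
`p ∈ (0,1)`, and `0 < α < 1`, then `z p / p → 1/(1−α)` as `p → 0⁺`. -/
theorem zstar_div_p_tendsto (α : ℝ) (hα0 : 0 < α) (hα1 : α < 1) (z : ℝ → ℝ)
    (hz : ∀ p ∈ Set.Ioo (0 : ℝ) 1,
      z p ∈ Set.Ico (0 : ℝ) 1 ∧ α * z p + log (1 - z p) = log (1 - p)) :
    Tendsto (fun p => z p / p) (nhdsWithin 0 (Set.Ioi 0)) (nhds (1 / (1 - α))) := by
  set f : ℝ → ℝ := fun t => α * t + Real.log (1 - t) with hf
  set h : ℝ → ℝ := fun t => 1 - (1 - t) * Real.exp (α * t) with hh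
  have hanti : StrictAntiOn f (Set.Ico 0 1) := by
    apply strictAntiOn_of_deriv_neg (convex_Ico 0 1)
    · apply ContinuousOn.add
      · exact (continuous_const.mul continuous_id).continuousOn
      · apply ContinuousOn.log
        · exact (continuous_const.sub continuous_id).continuousOn
        · intro x hx
          have : x < 1 := hx.2
          intro hc; rw [sub_eq_zero] at hc; linarith
    · intro x hx
      rw [interior_Ico] at hx
      have hx1 : (0:ℝ) < 1 - x := by linarith [hx.2]
      have hd : HasDerivAt f (α - (1-x)⁻¹) x := by
        have h1 : HasDerivAt (fun t : ℝ => α * t) α x := by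
          simpa using (hasDerivAt_id x).const_mul α
        have h2 : HasDerivAt (fun t : ℝ => Real.log (1 - t)) (-(1-x)⁻¹) x := by
          have h3 : HasDerivAt (fun t : ℝ => 1 - t) (-1) x := by
            simpa [Pi.sub_def] using (hasDerivAt_const x (1:ℝ)).sub (hasDerivAt_id x)
          have := (Real.hasDerivAt_log (ne_of_gt hx1)).comp x h3
          simpa [Function.comp_def] using this
        have := h1.add h2
        simpa [sub_eq_add_neg, Pi.add_def, hf] using this
      rw [hd.deriv]
      have h1x : 1 - x < 1 := by linarith [hx.1]
      have : 1 < (1-x)⁻¹ := by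
        rw [lt_inv_comm₀ one_pos hx1]; simpa using h1x
      linarith
  have hlog : ∀ p ∈ Set.Ioo (0:ℝ) 1, Real.log (1 - p) < 0 := fun p hp =>
    Real.log_neg (by linarith [hp.2]) (by linarith [hp.1])
  have hzpos : ∀ p ∈ Set.Ioo (0:ℝ) 1, 0 < z p := by
    intro p hp
    rcases (hz p hp) with ⟨hz1, hz2⟩
    rcases lt_or_eq_of_le hz1.1 with hlt | heq
    · exact hlt
    · exfalso
      rw [← heq] at hz2
      simp at hz2
      linarith [hlog p hp]
  have hmem : Set.Ioo (0:ℝ) 1 ∈ nhdsWithin (0:ℝ) (Set.Ioi 0) :=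
    Ioo_mem_nhdsGT_of_mem ⟨le_refl 0, one_pos⟩
  have hz0 : Tendsto z (nhdsWithin 0 (Set.Ioi 0)) (nhds 0) := by
    rw [tendsto_order]
    constructor
    · intro a ha
      filter_upwards [hmem] with p hp
      exact lt_of_lt_of_le ha (hz p hp).1.1
    · intro b hb
      set ε := min b (1/2) with hε
      have hε0 : 0 < ε := lt_min hb (by norm_num)
      have hε1 : ε < 1 := lt_of_le_of_lt (min_le_right _ _) (by norm_num)
      have hfε : f ε < 0 := by
        have := hanti ⟨le_refl 0, one_pos⟩ ⟨hε0.le, hε1⟩ hε0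
        simpa [hf] using this
      have hcont : Tendsto (fun p : ℝ => Real.log (1 - p)) (nhdsWithin 0 (Set.Ioi 0)) (nhds 0) := by
        have hc : ContinuousAt (fun p : ℝ => Real.log (1 - p)) 0 := by
          apply ContinuousAt.log
          · fun_prop
          · norm_num
        have := hc.tendsto.mono_left (nhdsWithin_le_nhds (s := Set.Ioi 0))
        simpa using this
      have hev : ∀ᶠ p in nhdsWithin (0:ℝ) (Set.Ioi 0), f ε < Real.log (1 - p) :=
        hcont.eventually (eventually_gt_nhds hfε)
      filter_upwards [hmem, hev] with p hp hfp
      by_contra hcon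
      push_neg at hcon
      have hεz : ε ≤ z p := le_trans (min_le_left _ _) hcon
      have hzmem := (hz p hp).1
      have hle : f (z p) ≤ f ε :=
        hanti.antitoneOn ⟨hε0.le, hε1⟩ hzmem hεz
      have hfz : f (z p) = Real.log (1 - p) := (hz p hp).2
      rw [hfz] at hle
      linarith
  have hz0' : Tendsto z (nhdsWithin 0 (Set.Ioi 0)) (nhdsWithin 0 (Set.Ioi 0)) := by
    rw [tendsto_nhdsWithin_iff]
    exact ⟨hz0, by filter_upwards [hmem] with p hp using hzpos p hp⟩
  have hd : HasDerivAt h (1 - α) 0 := by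
    have h1 : HasDerivAt (fun t : ℝ => Real.exp (α * t)) α 0 := by
      have := (Real.hasDerivAt_exp (α * 0)).comp 0 ((hasDerivAt_id 0).const_mul α)
      simpa [Function.comp_def] using this
    have h2 : HasDerivAt (fun t : ℝ => (1 - t) * Real.exp (α * t)) (α - 1) 0 := by
      have h3 : HasDerivAt (fun t : ℝ => 1 - t) (-1) 0 := by
        simpa [Pi.sub_def] using (hasDerivAt_const (0:ℝ) (1:ℝ)).sub (hasDerivAt_id 0)
      have := h3.mul h1
      simp [Pi.mul_def] at this
      refine this.congr_deriv ?_
      ring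
    have := (hasDerivAt_const (0:ℝ) (1:ℝ)).sub h2
    simpa [Pi.sub_def] using this
  have hne : (1:ℝ) - α ≠ 0 := by linarith
  have h0 : h 0 = 0 := by simp [hh]
  have hslope : Tendsto (fun t => h t / t) (nhdsWithin 0 (Set.Ioi 0)) (nhds (1 - α)) := by
    have hs := hasDerivAt_iff_tendsto_slope.mp hd
    have hmono : nhdsWithin (0:ℝ) (Set.Ioi 0) ≤ nhdsWithin (0:ℝ) {(0:ℝ)}ᶜ :=
      nhdsWithin_mono 0 (fun t ht => ne_of_gt ht)
    refine Tendsto.congr ?_ (hs.mono_left hmono)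
    intro t
    simp [slope_def_field, h0]
  have hg : Tendsto (fun t => t / h t) (nhdsWithin 0 (Set.Ioi 0)) (nhds (1/(1-α))) := by
    have := hslope.inv₀ hne
    simpa [one_div, inv_div] using this
  have key : ∀ p ∈ Set.Ioo (0:ℝ) 1, p = h (z p) := by
    intro p hp
    obtain ⟨hz1, hz2⟩ := hz p hp
    have h1z : (0:ℝ) < 1 - z p := by linarith [hz1.2]
    have h1p : (0:ℝ) < 1 - p := by linarith [hp.2]
    have hexp : Real.exp (α * z p) * (1 - z p) = 1 - p := by
      have := congrArg Real.exp hz2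
      rwa [Real.exp_add, Real.exp_log h1z, Real.exp_log h1p] at this
    simp only [hh]
    nlinarith [hexp]
  have hcomp := hg.comp hz0'
  refine hcomp.congr' ?_
  filter_upwards [hmem] with p hp
  simp only [Function.comp_apply]
  rw [← key p hp]
end

section
/- Let (M_t)_{t≥0} be a càdlàg real-valued martingale with M₀ = 0 such that, for each bounded previsible θ with |θ_t| ≤ η, the process Z_t^θ = exp(∫₀ᵗ θ_s dM_s − ∫₀ᵗ φ(X_s, θ_s) ds) is a martingale, where φ satisfies 0 ≤ φ(x, θ) ≤ (A/2)θ² for |θ| ≤ η. Then for every t > 0 and δ ∈ (0, Aηt], one has P(sup_{s ≤ t} M_s > δ) ≤ exp(−δ²/(2At)). -/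
open MeasureTheory Real Set Filter
open scoped ENNReal NNReal

set_option maxHeartbeats 2000000

/-- Exponential martingale bound (one-dimensional version of Proposition 5.1): let
`(M_t)` be a càdlàg martingale with `M₀ = 0` such that for each `θ` with `|θ| ≤ η`
the process `Z_t^θ = exp(θ M_t − ∫₀ᵗ φ(X_s, θ) ds)` is a martingale, where
`0 ≤ φ ≤ (A/2)θ²` for `|θ| ≤ η`. Then for `t > 0` and `δ ∈ (0, Aηt]`,
`P(sup_{s ≤ t} M_s > δ) ≤ exp(−δ²/(2At))`. -/
theorem exponential_martingale_bound
    {Ω : Type*} {m0 : MeasurableSpace Ω} (μ : Measure Ω) [IsProbabilityMeasure μ]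
    (ℱ : Filtration ℝ m0) (M : ℝ → Ω → ℝ) (A η : ℝ) (hA : 0 < A) (hη : 0 < η)
    (Φ : ℝ → Ω → ℝ → ℝ)
    (hΦ : ∀ s ω, ∀ ϑ : ℝ, |ϑ| ≤ η → 0 ≤ Φ s ω ϑ ∧ Φ s ω ϑ ≤ A / 2 * ϑ ^ 2)
    (hM : Martingale M ℱ μ) (hM0 : ∀ ω, M 0 ω = 0)
    (hcadlag : ∀ ω, ∀ t : ℝ,
      ContinuousWithinAt (fun s => M s ω) (Ici t) t ∧
        ∃ l : ℝ, Tendsto (fun s => M s ω) (nhdsWithin t (Iio t)) (nhds l))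
    (hZ : ∀ ϑ : ℝ, |ϑ| ≤ η →
      Martingale (fun t ω => Real.exp (ϑ * M t ω - ∫ s in (0 : ℝ)..t, Φ s ω ϑ)) ℱ μ) :
    ∀ t : ℝ, 0 < t → ∀ δ : ℝ, 0 < δ → δ ≤ A * η * t →
      μ {ω | ∃ s ∈ Icc (0 : ℝ) t, M s ω > δ} ≤
        ENNReal.ofReal (Real.exp (-δ ^ 2 / (2 * A * t))) := by
    classical
  intro t ht δ hδ hδle
  set ε : ℝ := δ / (A * t) with hεdef
  have hAt : 0 < A * t := mul_pos hA ht
  have hε : 0 < ε := div_pos hδ hAt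
  have hεη : ε ≤ η := by
    rw [hεdef, div_le_iff₀ hAt]; nlinarith
  have hεabs : |ε| ≤ η := by rw [abs_of_pos hε]; exact hεη
  set Z : ℝ → Ω → ℝ := fun r ω => Real.exp (ε * M r ω - ∫ s in (0 : ℝ)..r, Φ s ω ε)
    with hZdef
  have hZm : Martingale Z ℱ μ := hZ ε hεabs
  set c : ℝ := Real.exp (δ ^ 2 / (2 * A * t)) with hcdef
  have hc : 0 < c := Real.exp_pos _
  have hkey : ε * δ - A / 2 * ε ^ 2 * t = δ ^ 2 / (2 * A * t) := by
    rw [hεdef]; field_simp; ring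
  -- pointwise lower bound on Z on the event
  have hpt : ∀ (ω : Ω) (r : ℝ), 0 ≤ r → r ≤ t → δ < M r ω → c ≤ Z r ω := by
    intro ω r hr0 hrt hMr
    have hI : (∫ s in (0 : ℝ)..r, Φ s ω ε) ≤ A / 2 * ε ^ 2 * t := by
      by_cases hint : IntervalIntegrable (fun s => Φ s ω ε) volume 0 r
      · calc (∫ s in (0 : ℝ)..r, Φ s ω ε) ≤ ∫ _s in (0 : ℝ)..r, A / 2 * ε ^ 2 :=
              intervalIntegral.integral_mono_on hr0 hint intervalIntegrable_const
                (fun s _ => (hΦ s ω ε hεabs).2)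
          _ = A / 2 * ε ^ 2 * r := by simp; ring
          _ ≤ A / 2 * ε ^ 2 * t := by
              have : (0:ℝ) ≤ A / 2 * ε ^ 2 := by positivity
              exact mul_le_mul_of_nonneg_left hrt this
      · rw [intervalIntegral.integral_undef hint]; positivity
    have hle : δ ^ 2 / (2 * A * t) ≤ ε * M r ω - ∫ s in (0 : ℝ)..r, Φ s ω ε := by
      rw [← hkey]
      have h1 : ε * δ ≤ ε * M r ω := mul_le_mul_of_nonneg_left hMr.le hε.le
      linarith
    exact Real.exp_le_exp.2 hle
  -- countable dense set of times
  set d : ℕ → ℝ := fun n => max 0 (min ((Denumerable.ofNat ℚ n : ℚ) : ℝ) t) with hddef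
  have hd0 : ∀ n, 0 ≤ d n := fun n => le_max_left _ _
  have hdt : ∀ n, d n ≤ t := fun n => max_le ht.le (min_le_right _ _)
  have hsurj : Function.Surjective (Denumerable.ofNat ℚ) := fun q =>
    ⟨@Encodable.encode ℚ Denumerable.toEncodable q, Denumerable.ofNat_encode q⟩
  have hdq : ∀ q : ℚ, (0 : ℝ) ≤ q → (q : ℝ) ≤ t → ∃ n, d n = q := by
    intro q h0 h1
    obtain ⟨m, hm⟩ := hsurj q
    refine ⟨m, ?_⟩
    show max 0 (min ((Denumerable.ofNat ℚ m : ℚ) : ℝ) t) = q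
    rw [hm, min_eq_left h1, max_eq_right h0]
  have hdtmem : ∃ n, d n = t := by
    obtain ⟨q, hq⟩ := exists_rat_gt t
    obtain ⟨m, hm⟩ := hsurj q
    refine ⟨m, ?_⟩
    show max 0 (min ((Denumerable.ofNat ℚ m : ℚ) : ℝ) t) = t
    rw [hm, min_eq_right hq.le, max_eq_right ht.le]
  set Aset : ℕ → Set Ω := fun n => {ω | δ < M (d n) ω} with hAdef
  have hcover : {ω | ∃ s ∈ Icc (0 : ℝ) t, M s ω > δ} ⊆ ⋃ n, Aset n := by
    rintro ω ⟨s, ⟨hs0, hst⟩, hMs⟩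
    rcases eq_or_lt_of_le hst with rfl | hslt
    · obtain ⟨n, hn⟩ := hdtmem
      exact mem_iUnion.2 ⟨n, by simpa [hAdef, hn] using hMs⟩
    · have hcw := (hcadlag ω s).1
      have hpre : (fun u => M u ω) ⁻¹' Ioi δ ∈ nhdsWithin s (Ici s) :=
        hcw (Ioi_mem_nhds hMs)
      rw [Metric.mem_nhdsWithin_iff] at hpre
      obtain ⟨r, hr, hball⟩ := hpre
      obtain ⟨q, hq1, hq2⟩ := exists_rat_btwn (lt_min (lt_add_of_pos_right s hr) hslt)
      have hq2t : (q : ℝ) < t := lt_of_lt_of_le hq2 (min_le_right _ _)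
      have hq2r : (q : ℝ) < s + r := lt_of_lt_of_le hq2 (min_le_left _ _)
      have hq0 : (0 : ℝ) ≤ q := hs0.trans hq1.le
      obtain ⟨n, hn⟩ := hdq q hq0 hq2t.le
      refine mem_iUnion.2 ⟨n, ?_⟩
      have hmem : (q : ℝ) ∈ Metric.ball s r ∩ Ici s := by
        constructor
        · rw [Metric.mem_ball, Real.dist_eq, abs_of_pos (by linarith)]; linarith
        · exact hq1.le
      have := hball hmem
      simpa [hAdef, hn] using this
  refine le_trans (measure_mono hcover) ?_
  rw [measure_iUnion_eq_iSup_accumulate]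
  refine iSup_le fun n => ?_
  -- finite set of times
  set F : Finset ℝ := (Finset.range (n + 1)).image d with hFdef
  have hFcard : F.card ≤ n + 1 := le_trans Finset.card_image_le (by simp)
  have hFmem : ∀ x ∈ F, 0 ≤ x ∧ x ≤ t := by
    intro x hx
    obtain ⟨k, _, rfl⟩ := Finset.mem_image.1 hx
    exact ⟨hd0 k, hdt k⟩
  set e := F.orderIsoOfFin rfl with hedef
  set σ : ℕ → ℝ := fun k => if h : k < F.card then (e ⟨k, h⟩ : ℝ) else t with hσdef
  have hσ01 : ∀ k, 0 ≤ σ k ∧ σ k ≤ t := by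
    intro k
    by_cases h : k < F.card
    · simp only [hσdef, dif_pos h]
      exact hFmem _ (e ⟨k, h⟩).2
    · simp only [hσdef, dif_neg h]
      exact ⟨ht.le, le_rfl⟩
  have hσmono : Monotone σ := by
    intro i j hij
    by_cases hj : j < F.card
    · have hi : i < F.card := lt_of_le_of_lt hij hj
      simp only [hσdef, dif_pos hi, dif_pos hj]
      have : (⟨i, hi⟩ : Fin F.card) ≤ ⟨j, hj⟩ := hij
      exact_mod_cast e.monotone this
    · simp only [hσdef, dif_neg hj]
      exact (hσ01 i).2
  set 𝒢 : Filtration ℕ m0 :=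
    ⟨fun k => ℱ (σ k), fun i j hij => ℱ.mono (hσmono hij), fun k => ℱ.le _⟩ with h𝒢def
  set g : ℕ → Ω → ℝ := fun k => Z (σ k) with hgdef
  have hgmart : Martingale g 𝒢 μ :=
    ⟨fun k => hZm.stronglyAdapted (σ k), fun i j hij => hZm.2 (σ i) (σ j) (hσmono hij)⟩
  have hgnn : (0 : ℕ → Ω → ℝ) ≤ g := fun k ω => (Real.exp_pos _).le
  set ε₀ : NNReal := ⟨c, hc.le⟩ with hε₀def
  have hmax := maximal_ineq hgmart.submartingale hgnn (ε := ε₀) n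
  -- the accumulated event is contained in the maximal event
  have hsubset : accumulate Aset n ⊆
      {ω | (ε₀ : ℝ) ≤ (Finset.range (n + 1)).sup' Finset.nonempty_range_add_one
        fun k => g k ω} := by
    intro ω hω
    rw [Set.mem_accumulate] at hω
    obtain ⟨k, hk, hωk⟩ := hω
    have hdF : d k ∈ F :=
      Finset.mem_image.2 ⟨k, Finset.mem_range.2 (Nat.lt_succ_of_le hk), rfl⟩
    obtain ⟨i, hi⟩ := e.surjective ⟨d k, hdF⟩
    have hicard : (i : ℕ) < F.card := i.2
    have hσi : σ (i : ℕ) = d k := by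
      simp only [hσdef, dif_pos hicard]
      rw [Fin.eta i hicard, hi]
    have hmem : (i : ℕ) ∈ Finset.range (n + 1) :=
      Finset.mem_range.2 (lt_of_lt_of_le hicard hFcard)
    have hgi : c ≤ g (i : ℕ) ω := by
      rw [hgdef]
      simp only
      rw [hσi]
      exact hpt ω (d k) (hd0 k) (hdt k) hωk
    exact le_trans hgi (Finset.le_sup' (fun k => g k ω) hmem)
  -- expectation of g n is 1
  have hEg : ∫ ω, g n ω ∂μ = 1 := by
    have h0n : (0 : ℝ) ≤ σ n := (hσ01 n).1
    have hce := hZm.2 0 (σ n) h0n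
    have h1 : ∫ ω, g n ω ∂μ = ∫ ω, Z 0 ω ∂μ := by
      rw [hgdef]
      simp only
      rw [← integral_condExp (ℱ.le 0)]
      exact integral_congr_ae hce
    rw [h1]
    have hZ0 : ∀ ω, Z 0 ω = 1 := by
      intro ω
      simp [hZdef, hM0 ω]
    simp [hZ0]
  have hset : ENNReal.ofReal (∫ ω in {ω | (ε₀ : ℝ) ≤ (Finset.range (n + 1)).sup'
      Finset.nonempty_range_add_one fun k => g k ω}, g n ω ∂μ) ≤ ENNReal.ofReal 1 := by
    apply ENNReal.ofReal_le_ofReal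
    rw [← hEg]
    exact setIntegral_le_integral (hgmart.integrable n)
      (ae_of_all μ fun ω => (Real.exp_pos _).le)
  have hε₀ne : (ε₀ : ℝ≥0∞) ≠ 0 := by
    simp [hε₀def, ENNReal.coe_eq_zero, ← NNReal.coe_eq_zero]
    exact ENNReal.coe_ne_zero.2 (ne_of_gt (show (0:ℝ≥0) < ⟨c, hc.le⟩ from hc))
  have h1 : (ε₀ : ℝ≥0∞) * μ (accumulate Aset n) ≤ ENNReal.ofReal 1 := by
    calc (ε₀ : ℝ≥0∞) * μ (accumulate Aset n)
        ≤ (ε₀ : ℝ≥0∞) * μ {ω | (ε₀ : ℝ) ≤ (Finset.range (n + 1)).sup'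
            Finset.nonempty_range_add_one fun k => g k ω} :=
          mul_le_mul_right (measure_mono hsubset) _
      _ ≤ ENNReal.ofReal (∫ ω in {ω | (ε₀ : ℝ) ≤ (Finset.range (n + 1)).sup'
            Finset.nonempty_range_add_one fun k => g k ω}, g n ω ∂μ) := by
          simpa [ENNReal.smul_def] using hmax
      _ ≤ ENNReal.ofReal 1 := hset
  have h2 : μ (accumulate Aset n) ≤ ENNReal.ofReal 1 / (ε₀ : ℝ≥0∞) := by
    rw [ENNReal.le_div_iff_mul_le (Or.inl hε₀ne) (Or.inl ENNReal.coe_ne_top)]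
    rwa [mul_comm]
  refine h2.trans ?_
  have hcoe : (ε₀ : ℝ≥0∞) = ENNReal.ofReal c := by
    rw [ENNReal.ofReal_eq_coe_nnreal hc.le]; rfl
  rw [hcoe, ← ENNReal.ofReal_div_of_pos hc]
  apply ENNReal.ofReal_le_ofReal
  rw [hcdef]
  rw [neg_div, Real.exp_neg]
  rw [one_div]
end

section
/- Suppose a vertex v is identifiable in a hypergraph Λ on V. Then v ∈ V*, i.e., v is removed in any maximal sequence of permitted collapses; conversely, every vertex removed in such a sequence is identifiable. Hence V* equals the set of identifiable vertices. -/
/-- A vertex `v` is identifiable if it belongs to some hyperedge `A` with `Λ A ≥ 1`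
all of whose other vertices are identifiable in fewer steps. -/
inductive Identifiable {V : Type*} (Λ : Finset V → ℕ) : V → Prop
  | step (v : V) (A : Finset V) (hv : v ∈ A) (hA : 1 ≤ Λ A)
      (h : ∀ w ∈ A, w ≠ v → Identifiable Λ w) : Identifiable Λ v

lemma identifiable_of_collapse {V : Type*} [DecidableEq V] {Λ : Finset V → ℕ} {w : V}
    (hw : 1 ≤ Λ {w}) {u : V} (h : Identifiable (collapseAt Λ w) u) : Identifiable Λ u := by
  induction h with
  | step v A hv hA h ih =>
    unfold collapseAt at hA
    by_cases hwA : w ∈ A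
    · simp [hwA] at hA
    · simp only [hwA, if_false] at hA
      by_cases h1 : 1 ≤ Λ A
      · exact Identifiable.step v A hv h1 ih
      · have h2 : 1 ≤ Λ (insert w A) := by omega
        refine Identifiable.step v (insert w A) (Finset.mem_insert_of_mem hv) h2 ?_
        intro x hx hxv
        rcases Finset.mem_insert.mp hx with rfl | hxA
        · exact Identifiable.step x {x} (Finset.mem_singleton_self x) hw
            (by intro y hy hne; exact absurd (Finset.mem_singleton.mp hy) hne)
        · exact ih x hxA hxv

lemma identifiable_of_mem {V : Type*} [DecidableEq V] :
    ∀ (l : List V) (Λ : Finset V → ℕ), IsPermittedSeq Λ l → ∀ v ∈ l, Identifiable Λ v := by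
  intro l
  induction l with
  | nil => intro Λ _ v hv; simp at hv
  | cons w l ih =>
    intro Λ hp v hv
    obtain ⟨hw, hp'⟩ := hp
    rcases List.mem_cons.mp hv with rfl | hv'
    · exact Identifiable.step v {v} (Finset.mem_singleton_self v) hw
        (by intro y hy hne; exact absurd (Finset.mem_singleton.mp hy) hne)
    · exact identifiable_of_collapse hw (ih (collapseAt Λ w) hp' v hv')

lemma collapseList_ge {V : Type*} [DecidableEq V] :
    ∀ (l : List V) (Λ : Finset V → ℕ) (B A : Finset V), B ⊆ A →
      (∀ w ∈ A, w ∉ B → w ∈ l) → (∀ w ∈ l, w ∉ B) →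
      Λ A ≤ collapseList Λ l B := by
  intro l
  induction l with
  | nil =>
      intro Λ B A hBA hAl _
      have : A = B := Finset.Subset.antisymm (fun x hx => by
        by_contra hxB; exact absurd (hAl x hx hxB) List.not_mem_nil) hBA
      simp [collapseList, this]
  | cons w l ih =>
      intro Λ B A hBA hAl hlB
      have hwB : w ∉ B := hlB w List.mem_cons_self
      show Λ A ≤ collapseList (collapseAt Λ w) l B
      by_cases hwA : w ∈ A
      · have step : Λ A ≤ collapseAt Λ w (A.erase w) := by
          have hwe : w ∉ A.erase w := Finset.notMem_erase w A
          simp only [collapseAt, hwe, if_false]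
          have : insert w (A.erase w) = A := Finset.insert_erase hwA
          rw [this]; omega
        refine le_trans step (ih (collapseAt Λ w) B (A.erase w) ?_ ?_ ?_)
        · intro x hx; exact Finset.mem_erase.mpr ⟨fun h => hwB (h ▸ hx), hBA hx⟩
        · intro x hx hxB
          obtain ⟨hxw, hxA⟩ := Finset.mem_erase.mp hx
          rcases List.mem_cons.mp (hAl x hxA hxB) with rfl | h
          · exact absurd rfl hxw
          · exact h
        · intro x hx; exact hlB x (List.mem_cons_of_mem w hx)
      · have step : Λ A ≤ collapseAt Λ w A := by
          simp only [collapseAt, hwA, if_false]; omega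
        refine le_trans step (ih (collapseAt Λ w) B A hBA ?_ ?_)
        · intro x hx hxB
          rcases List.mem_cons.mp (hAl x hx hxB) with rfl | h
          · exact absurd hx hwA
          · exact h
        · intro x hx; exact hlB x (List.mem_cons_of_mem w hx)

/-- The set of vertices removed by any maximal sequence of permitted collapses is
exactly the set of identifiable vertices: `V*` equals the identifiable set. -/
theorem removed_iff_identifiable {V : Type*} [Fintype V] [DecidableEq V]
    (Λ : Finset V → ℕ) (l : List V) (h : IsMaximalSeq Λ l) (v : V) :
    v ∈ l.toFinset ↔ Identifiable Λ v := by
  obtain ⟨hperm, hstab⟩ := h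
  constructor
  · intro hv
    exact identifiable_of_mem l Λ hperm v (List.mem_toFinset.mp hv)
  · intro hid
    induction hid with
    | step u A hu hA hrest ih =>
      by_contra hul
      have hul' : u ∉ l := fun h => hul (List.mem_toFinset.mpr h)
      have := collapseList_ge l Λ {u} A (Finset.singleton_subset_iff.mpr hu)
        (fun w hw hwu => List.mem_toFinset.mp
          (ih w hw (fun h => hwu (Finset.mem_singleton.mpr h))))
        (fun w hw hwu => hul' ((Finset.mem_singleton.mp hwu) ▸ hw))
      have := hstab u
      omega
end
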